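/- Two-sided bound on L applied to the approximating candidate: Let v*, u be C² functions on B with L v* = 0 on B and L u = −1 on B. Let C := max{4, sup_{x ∈ B}(Σ_{i,j}|a_ij(x)| + Σ_i |f_0i(x)|)}, let δ > 0 with C·δ ≤ 1/2, and let p, q be real polynomials with ‖v* − p‖_{C²(B)} ≤ δ and ‖u − q‖_{C²(B)} ≤ δ. Set ε := 2Cδ/(1 − Cδ) and v_d := p + ε·q − ε. Then for all x ∈ B, −7Cδ ≤ (L v_d)(x) ≤ −Cδ. -/

import Mathlib

open MvPolynomial

noncomputable section

/-- The closed Euclidean unit ball in `ℝⁿ`. -/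
def Bset (n : ℕ) : Set (Fin n → ℝ) := {x | ∑ i, x i ^ 2 ≤ 1}

/-- The generator `L` of the diffusion, acting on `C²` functions:
`(Lv)(x) = −Σ_{i,j} a_ij(x) ∂²v/∂x_i∂x_j(x) + Σ_i f_0i(x) ∂v/∂x_i(x)`. -/
def Lgen {n : ℕ} (a : Fin n → Fin n → MvPolynomial (Fin n) ℝ)
    (f0 : Fin n → MvPolynomial (Fin n) ℝ) (v : (Fin n → ℝ) → ℝ) (x : Fin n → ℝ) : ℝ :=
  -(∑ i, ∑ j, eval x (a i j) *
      fderiv ℝ (fun y => fderiv ℝ v y (Pi.single j 1)) x (Pi.single i 1)) +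
    ∑ i, eval x (f0 i) * fderiv ℝ v x (Pi.single i 1)

/-- `‖h‖_{C²(B)} ≤ δ`: the function and all its first and second order partial derivatives
are bounded by `δ` in sup-norm on `B`. -/
def C2BoundedBy (n : ℕ) (h : (Fin n → ℝ) → ℝ) (δ : ℝ) : Prop :=
  ∀ x ∈ Bset n, |h x| ≤ δ ∧
    (∀ i : Fin n, |fderiv ℝ h x (Pi.single i 1)| ≤ δ) ∧
    (∀ i j : Fin n,
      |fderiv ℝ (fun y => fderiv ℝ h y (Pi.single j 1)) x (Pi.single i 1)| ≤ δ)

lemma mvpoly_contDiff {n : ℕ} (P : MvPolynomial (Fin n) ℝ) {m : WithTop ℕ∞} :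
    ContDiff ℝ m (fun x : Fin n → ℝ => eval x P) := by
  induction P using MvPolynomial.induction_on with
  | C a => simpa using contDiff_const
  | add p q hp hq => simpa using hp.add hq
  | mul_X p i hp =>
      simpa using hp.mul ((ContinuousLinearMap.proj i : (Fin n → ℝ) →L[ℝ] ℝ).contDiff)

lemma diffAt_D {n : ℕ} {f : (Fin n → ℝ) → ℝ} {U : Set (Fin n → ℝ)} (hU : IsOpen U)
    (hf : ContDiffOn ℝ 2 f U) {x : Fin n → ℝ} (hx : x ∈ U) (j : Fin n) :
    DifferentiableAt ℝ (fun y => fderiv ℝ f y (Pi.single j 1)) x := by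
  have h1 : ContDiffOn ℝ 1 (fderiv ℝ f) U := hf.fderiv_of_isOpen hU (by norm_num)
  have h2 : ContDiffOn ℝ 1 (fun y => fderiv ℝ f y (Pi.single j 1)) U :=
    (ContinuousLinearMap.apply ℝ ℝ (Pi.single j 1 : Fin n → ℝ)).contDiff.comp_contDiffOn h1
  exact (h2.differentiableOn one_ne_zero).differentiableAt (hU.mem_nhds hx)

lemma diffAt_of_C2 {n : ℕ} {f : (Fin n → ℝ) → ℝ} {U : Set (Fin n → ℝ)} (hU : IsOpen U)
    (hf : ContDiffOn ℝ 2 f U) {x : Fin n → ℝ} (hx : x ∈ U) :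
    DifferentiableAt ℝ f x :=
  ((hf.differentiableOn (by norm_num)).differentiableAt (hU.mem_nhds hx))

lemma Lgen_comb {n : ℕ} (a : Fin n → Fin n → MvPolynomial (Fin n) ℝ)
    (f0 : Fin n → MvPolynomial (Fin n) ℝ)
    {f g : (Fin n → ℝ) → ℝ} {U : Set (Fin n → ℝ)} (hU : IsOpen U)
    (hf : ContDiffOn ℝ 2 f U) (hg : ContDiffOn ℝ 2 g U)
    (c d e : ℝ) {x : Fin n → ℝ} (hx : x ∈ U) :
    Lgen a f0 (fun y => c * f y + d * g y + e) x
      = c * Lgen a f0 f x + d * Lgen a f0 g x := by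
  have key1 : ∀ y ∈ U, fderiv ℝ (fun z => c * f z + d * g z + e) y
      = c • fderiv ℝ f y + d • fderiv ℝ g y := by
    intro y hy
    rw [fderiv_add_const,
      fderiv_fun_add ((diffAt_of_C2 hU hf hy).const_mul c) ((diffAt_of_C2 hU hg hy).const_mul d),
      fderiv_const_mul (diffAt_of_C2 hU hf hy) c, fderiv_const_mul (diffAt_of_C2 hU hg hy) d]
  have key1' : ∀ i : Fin n, fderiv ℝ (fun z => c * f z + d * g z + e) x (Pi.single i 1)
      = c * fderiv ℝ f x (Pi.single i 1) + d * fderiv ℝ g x (Pi.single i 1) := by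
    intro i; rw [key1 x hx]; simp
  have key2 : ∀ i j : Fin n,
      fderiv ℝ (fun y => fderiv ℝ (fun z => c * f z + d * g z + e) y (Pi.single j 1)) x
        (Pi.single i 1)
      = c * fderiv ℝ (fun y => fderiv ℝ f y (Pi.single j 1)) x (Pi.single i 1)
        + d * fderiv ℝ (fun y => fderiv ℝ g y (Pi.single j 1)) x (Pi.single i 1) := by
    intro i j
    have hE : (fun y => fderiv ℝ (fun z => c * f z + d * g z + e) y (Pi.single j 1))
        =ᶠ[nhds x] fun y => c * fderiv ℝ f y (Pi.single j 1)
            + d * fderiv ℝ g y (Pi.single j 1) := by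
      filter_upwards [hU.mem_nhds hx] with y hy
      rw [key1 y hy]; simp
    rw [hE.fderiv_eq,
      fderiv_fun_add ((diffAt_D hU hf hx j).const_mul c) ((diffAt_D hU hg hx j).const_mul d),
      fderiv_const_mul (diffAt_D hU hf hx j) c, fderiv_const_mul (diffAt_D hU hg hx j) d]
    simp
  have split2 : ∑ i, ∑ j, eval x (a i j) *
        (c * fderiv ℝ (fun y => fderiv ℝ f y (Pi.single j 1)) x (Pi.single i 1)
          + d * fderiv ℝ (fun y => fderiv ℝ g y (Pi.single j 1)) x (Pi.single i 1))
      = c * (∑ i, ∑ j, eval x (a i j) *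
            fderiv ℝ (fun y => fderiv ℝ f y (Pi.single j 1)) x (Pi.single i 1))
        + d * (∑ i, ∑ j, eval x (a i j) *
            fderiv ℝ (fun y => fderiv ℝ g y (Pi.single j 1)) x (Pi.single i 1)) := by
    simp only [Finset.mul_sum, ← Finset.sum_add_distrib]
    exact Finset.sum_congr rfl fun i _ => Finset.sum_congr rfl fun j _ => by ring
  have split1 : ∑ i, eval x (f0 i) *
        (c * fderiv ℝ f x (Pi.single i 1) + d * fderiv ℝ g x (Pi.single i 1))
      = c * (∑ i, eval x (f0 i) * fderiv ℝ f x (Pi.single i 1))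
        + d * (∑ i, eval x (f0 i) * fderiv ℝ g x (Pi.single i 1)) := by
    simp only [Finset.mul_sum, ← Finset.sum_add_distrib]
    exact Finset.sum_congr rfl fun i _ => by ring
  simp only [Lgen, key1', key2, split1, split2]
  ring

lemma Lgen_bound {n : ℕ} (a : Fin n → Fin n → MvPolynomial (Fin n) ℝ)
    (f0 : Fin n → MvPolynomial (Fin n) ℝ) {h : (Fin n → ℝ) → ℝ} {δ Cc : ℝ}
    (hh : C2BoundedBy n h δ) (hδ : 0 ≤ δ)
    (hCc : ∀ x ∈ Bset n, (∑ i, ∑ j, |eval x (a i j)|) + ∑ i, |eval x (f0 i)| ≤ Cc)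
    {x : Fin n → ℝ} (hx : x ∈ Bset n) : |Lgen a f0 h x| ≤ Cc * δ := by
  obtain ⟨-, h1, h2⟩ := hh x hx
  have hS1 : |∑ i, ∑ j, eval x (a i j) *
        fderiv ℝ (fun y => fderiv ℝ h y (Pi.single j 1)) x (Pi.single i 1)|
      ≤ (∑ i, ∑ j, |eval x (a i j)|) * δ := by
    calc |∑ i, ∑ j, eval x (a i j) *
          fderiv ℝ (fun y => fderiv ℝ h y (Pi.single j 1)) x (Pi.single i 1)|
        ≤ ∑ i, |∑ j, eval x (a i j) *
          fderiv ℝ (fun y => fderiv ℝ h y (Pi.single j 1)) x (Pi.single i 1)| :=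
          Finset.abs_sum_le_sum_abs _ _
      _ ≤ ∑ i, ∑ j, |eval x (a i j) *
          fderiv ℝ (fun y => fderiv ℝ h y (Pi.single j 1)) x (Pi.single i 1)| :=
          Finset.sum_le_sum fun i _ => Finset.abs_sum_le_sum_abs _ _
      _ ≤ ∑ i, ∑ j, |eval x (a i j)| * δ := by
          refine Finset.sum_le_sum fun i _ => Finset.sum_le_sum fun j _ => ?_
          rw [abs_mul]
          exact mul_le_mul_of_nonneg_left (h2 i j) (abs_nonneg _)
      _ = (∑ i, ∑ j, |eval x (a i j)|) * δ := by simp [Finset.sum_mul]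
  have hS2 : |∑ i, eval x (f0 i) * fderiv ℝ h x (Pi.single i 1)|
      ≤ (∑ i, |eval x (f0 i)|) * δ := by
    calc |∑ i, eval x (f0 i) * fderiv ℝ h x (Pi.single i 1)|
        ≤ ∑ i, |eval x (f0 i) * fderiv ℝ h x (Pi.single i 1)| :=
          Finset.abs_sum_le_sum_abs _ _
      _ ≤ ∑ i, |eval x (f0 i)| * δ := by
          refine Finset.sum_le_sum fun i _ => ?_
          rw [abs_mul]
          exact mul_le_mul_of_nonneg_left (h1 i) (abs_nonneg _)
      _ = (∑ i, |eval x (f0 i)|) * δ := by simp [Finset.sum_mul]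
  have hCx := hCc x hx
  calc |Lgen a f0 h x| ≤ |-(∑ i, ∑ j, eval x (a i j) *
          fderiv ℝ (fun y => fderiv ℝ h y (Pi.single j 1)) x (Pi.single i 1))|
        + |∑ i, eval x (f0 i) * fderiv ℝ h x (Pi.single i 1)| := abs_add_le _ _
    _ ≤ (∑ i, ∑ j, |eval x (a i j)|) * δ + (∑ i, |eval x (f0 i)|) * δ := by
        rw [abs_neg]; exact add_le_add hS1 hS2
    _ ≤ Cc * δ := by nlinarith

/-- Two-sided bound on `L` applied to the approximating candidate: with
`C = max{4, sup_B(Σ|a_ij| + Σ|f_0i|)}`, `Cδ ≤ 1/2`, `‖v* − p‖_{C²(B)} ≤ δ`,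
`‖u − q‖_{C²(B)} ≤ δ`, `ε = 2Cδ/(1 − Cδ)` and `v_d = p + ε·q − ε`, one has
`−7Cδ ≤ (L v_d)(x) ≤ −Cδ` for all `x ∈ B`. -/
theorem stmt13 (n : ℕ) (hn : 1 ≤ n)
    (a : Fin n → Fin n → MvPolynomial (Fin n) ℝ) (f0 : Fin n → MvPolynomial (Fin n) ℝ)
    (hFact : ∃ (r : ℕ) (F : Fin n → Fin r → MvPolynomial (Fin n) ℝ),
      ∀ i j, a i j = ∑ k, F i k * F j k)
    (hPD : ∀ x ∈ Bset n, Matrix.PosDef (Matrix.of fun i j => eval x (a i j)))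
    (U : Set (Fin n → ℝ)) (hU : IsOpen U) (hBU : Bset n ⊆ U)
    (vstar u : (Fin n → ℝ) → ℝ)
    (hvstarC2 : ContDiffOn ℝ 2 vstar U) (huC2 : ContDiffOn ℝ 2 u U)
    (hvstarL : ∀ x ∈ Bset n, Lgen a f0 vstar x = 0)
    (huL : ∀ x ∈ Bset n, Lgen a f0 u x = -1)
    (Cc : ℝ)
    (hC : Cc = max 4 (sSup ((fun x =>
      (∑ i, ∑ j, |eval x (a i j)|) + ∑ i, |eval x (f0 i)|) '' Bset n)))
    (δ : ℝ) (hδ : 0 < δ) (hCδ : Cc * δ ≤ 1 / 2)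
    (p q : MvPolynomial (Fin n) ℝ)
    (hp : C2BoundedBy n (fun y => vstar y - eval y p) δ)
    (hq : C2BoundedBy n (fun y => u y - eval y q) δ)
    (ε : ℝ) (hε : ε = 2 * Cc * δ / (1 - Cc * δ)) :
    ∀ x ∈ Bset n,
      -7 * Cc * δ ≤ Lgen a f0 (fun y => eval y p + ε * eval y q - ε) x ∧
      Lgen a f0 (fun y => eval y p + ε * eval y q - ε) x ≤ -(Cc * δ) := by
  -- compactness of the ball
  have hBsub : Bset n ⊆ Metric.closedBall (0 : Fin n → ℝ) 1 := by
    intro x hx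
    rw [Metric.mem_closedBall, dist_zero_right]
    rw [pi_norm_le_iff_of_nonneg zero_le_one]
    intro i
    have h1 : x i ^ 2 ≤ 1 :=
      le_trans (Finset.single_le_sum (fun j _ => sq_nonneg (x j)) (Finset.mem_univ i)) hx
    have : |x i| ≤ 1 := by nlinarith [sq_abs (x i), abs_nonneg (x i)]
    simpa using this
  have hBclosed : IsClosed (Bset n) := by
    have : Bset n = (fun x : Fin n → ℝ => ∑ i, x i ^ 2) ⁻¹' Set.Iic 1 := rfl
    rw [this]
    exact IsClosed.preimage (by fun_prop) isClosed_Iic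
  have hBcompact : IsCompact (Bset n) :=
    (isCompact_closedBall (0 : Fin n → ℝ) 1).of_isClosed_subset hBclosed hBsub
  have hcont : Continuous fun x : Fin n → ℝ =>
      (∑ i, ∑ j, |eval x (a i j)|) + ∑ i, |eval x (f0 i)| := by
    refine Continuous.add ?_ ?_
    · exact continuous_finset_sum _ fun i _ => continuous_finset_sum _ fun j _ =>
        ((mvpoly_contDiff (a i j) (m := 0)).continuous).abs
    · exact continuous_finset_sum _ fun i _ =>
        ((mvpoly_contDiff (f0 i) (m := 0)).continuous).abs
  have hCc : ∀ x ∈ Bset n, (∑ i, ∑ j, |eval x (a i j)|) + ∑ i, |eval x (f0 i)| ≤ Cc := by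
    intro x hx
    rw [hC]
    have hbdd : BddAbove ((fun x : Fin n → ℝ =>
        (∑ i, ∑ j, |eval x (a i j)|) + ∑ i, |eval x (f0 i)|) '' Bset n) :=
      (hBcompact.image_of_continuousOn hcont.continuousOn).bddAbove
    exact le_trans (le_csSup hbdd ⟨x, hx, rfl⟩) (le_max_right _ _)
  have hC4 : (4 : ℝ) ≤ Cc := hC ▸ le_max_left _ _
  -- regularity
  have hpC2 : ContDiffOn ℝ 2 (fun y : Fin n → ℝ => eval y p) U :=
    (mvpoly_contDiff p).contDiffOn
  have hqC2 : ContDiffOn ℝ 2 (fun y : Fin n → ℝ => eval y q) U :=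
    (mvpoly_contDiff q).contDiffOn
  have hhvC2 : ContDiffOn ℝ 2 (fun y => vstar y - eval y p) U := hvstarC2.sub hpC2
  have hhuC2 : ContDiffOn ℝ 2 (fun y => u y - eval y q) U := huC2.sub hqC2
  intro x hx
  have hxU : x ∈ U := hBU hx
  -- L p and L q
  have hsplitv : Lgen a f0 vstar x
      = Lgen a f0 (fun y => vstar y - eval y p) x + Lgen a f0 (fun y => eval y p) x := by
    have := Lgen_comb a f0 hU hhvC2 hpC2 1 1 0 hxU
    have hfun : (fun y => 1 * (vstar y - eval y p) + 1 * eval y p + 0) = vstar := by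
      funext y; ring
    rw [hfun] at this
    simpa using this
  have hsplitu : Lgen a f0 u x
      = Lgen a f0 (fun y => u y - eval y q) x + Lgen a f0 (fun y => eval y q) x := by
    have := Lgen_comb a f0 hU hhuC2 hqC2 1 1 0 hxU
    have hfun : (fun y => 1 * (u y - eval y q) + 1 * eval y q + 0) = u := by
      funext y; ring
    rw [hfun] at this
    simpa using this
  have hbp : |Lgen a f0 (fun y => vstar y - eval y p) x| ≤ Cc * δ :=
    Lgen_bound a f0 hp hδ.le hCc hx
  have hbq : |Lgen a f0 (fun y => u y - eval y q) x| ≤ Cc * δ :=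
    Lgen_bound a f0 hq hδ.le hCc hx
  -- L v_d
  have hcomb : Lgen a f0 (fun y => eval y p + ε * eval y q - ε) x
      = Lgen a f0 (fun y => eval y p) x + ε * Lgen a f0 (fun y => eval y q) x := by
    have := Lgen_comb a f0 hU hpC2 hqC2 1 ε (-ε) hxU
    have hfun : (fun y => 1 * eval y p + ε * eval y q + -ε)
        = fun y => eval y p + ε * eval y q - ε := by funext y; ring
    rw [hfun] at this
    simpa using this
  -- arithmetic
  set δ' := Cc * δ with hδ'
  have hδ'pos : 0 < δ' := mul_pos (by linarith) hδ
  have hApQ := hvstarL x hx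
  have hBq := huL x hx
  have hA : |Lgen a f0 (fun y => eval y p) x| ≤ δ' := by
    have heq : Lgen a f0 (fun y => eval y p) x
        = -Lgen a f0 (fun y => vstar y - eval y p) x := by
      linarith [hsplitv, hApQ]
    rw [heq, abs_neg]; exact hbp
  have hB : |Lgen a f0 (fun y => eval y q) x + 1| ≤ δ' := by
    have : Lgen a f0 (fun y => eval y q) x + 1
        = -Lgen a f0 (fun y => u y - eval y q) x := by
      rw [hsplitu] at hBq; linarith
    rw [this, abs_neg]; exact hbq
  obtain ⟨hA1, hA2⟩ := abs_le.mp hA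
  obtain ⟨hB1, hB2⟩ := abs_le.mp hB
  have h1δ : (1 : ℝ) / 2 ≤ 1 - δ' := by linarith
  have hεeq : ε * (1 - δ') = 2 * δ' := by
    rw [hε]; field_simp [hδ']; ring
  have hεnn : 0 ≤ ε := by
    rw [hε]
    exact div_nonneg (by nlinarith) (by linarith)
  have hε4 : ε ≤ 4 * δ' := by nlinarith [hεeq, h1δ, hεnn]
  rw [hcomb]
  constructor
  · nlinarith [mul_le_mul_of_nonneg_left hB1 hεnn, hεeq, hA1, hε4, hδ'pos, hδ']
  · nlinarith [mul_le_mul_of_nonneg_left hB2 hεnn, hεeq, hA2, hδ']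


end
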